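/- Let R be an EZ-category and X a presheaf on R. If X is n-coskeletal (the unit X → cosk_n X is an isomorphism), then for every object r with d(r) > n and every morphism ∂R[r] → X from the boundary of the representable presheaf, there exists a unique extension R[r] → X along the boundary inclusion ∂R[r] → R[r]; and conversely this unique-filler property implies X is n-coskeletal, given that ∂R[r] = sk_{d(r)−1} R[r]. -/

import Mathlib

open CategoryTheory CategoryTheory.Limits CategoryTheory.GrothendieckTopology Opposite

/-- An EZ-category structure (Eilenberg–Zilber category) on a small category `R`. -/
structure EZStruct (R : Type) [SmallCategory R] where
  deg : R → ℕ
  mono_iso_iff : ∀ {a b : R} (f : a ⟶ b), Mono f → (deg a = deg b ↔ IsIso f)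
  mono_raises_iff : ∀ {a b : R} (f : a ⟶ b), Mono f → (deg a < deg b ↔ ¬ IsIso f)
  factor : ∀ {a c : R} (f : a ⟶ c),
    ∃ (b : R) (h : a ⟶ b) (g : b ⟶ c), IsSplitEpi h ∧ Mono g ∧ h ≫ g = f
  absPushout : ∀ {a b c : R} (p : a ⟶ b) (q : a ⟶ c), IsSplitEpi p → IsSplitEpi q →
    ∃ (d : R) (f : b ⟶ d) (g : c ⟶ d), p ≫ f = q ≫ g ∧
      IsPushout (yoneda.map p) (yoneda.map q) (yoneda.map f) (yoneda.map g)

/-- The boundary `∂R[r] ⊆ R[r]`: the subpresheaf of the representable presheaf consisting of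
those elements which factor through a non-invertible monomorphism (face operator) into `r`. -/
def ezBoundary {R : Type} [SmallCategory R] (r : R) : Subfunctor (yoneda.obj r) where
  obj s := {u : (yoneda.obj r).obj s |
    ∃ (b : R) (m : b ⟶ r) (h : s.unop ⟶ b), Mono m ∧ ¬ IsIso m ∧ h ≫ m = u}
  map := by
    rintro s t i u ⟨b, m, h, hm, hi, he⟩
    exact ⟨b, m, i.unop ≫ h, hm, hi, by rw [Category.assoc, he]; rfl⟩


namespace Stmt5Aux

variable {R : Type} [SmallCategory R]

/-- The truncation (restriction) functor to presheaves over the degree-`≤ m` subcategory. -/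
abbrev tr (d : R → ℕ) (m : ℕ) :
    (Rᵒᵖ ⥤ Type) ⥤ ((ObjectProperty.FullSubcategory fun r : R => d r ≤ m)ᵒᵖ ⥤ Type) :=
  (Functor.whiskeringLeft (ObjectProperty.FullSubcategory fun r : R => d r ≤ m)ᵒᵖ Rᵒᵖ Type).obj
    (ObjectProperty.ι fun r : R => d r ≤ m).op

/-- Bijectivity of the truncation functor on morphisms `A ⟶ X`. -/
def PP (d : R → ℕ) (m : ℕ) (X A : Rᵒᵖ ⥤ Type) : Prop :=
  Function.Bijective (fun v : A ⟶ X => (tr d m).map v)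

lemma tr_ext {d : R → ℕ} {m : ℕ} {A X : Rᵒᵖ ⥤ Type} {v v' : A ⟶ X}
    (h : ∀ s : R, d s ≤ m → v.app (op s) = v'.app (op s)) :
    (tr d m).map v = (tr d m).map v' := by
  apply NatTrans.ext; funext t
  exact h t.unop.obj t.unop.property

/-- Naturality of a map between truncated presheaves, in terms of the ambient category. -/
lemma tr_nat {d : R → ℕ} {m : ℕ} {A X : Rᵒᵖ ⥤ Type}
    (w : (tr d m).obj A ⟶ (tr d m).obj X) {t s : R} (ht : d t ≤ m) (hs : d s ≤ m)
    (g : t ⟶ s) (f : A.obj (op s)) :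
    w.app (op ⟨t, ht⟩) (A.map g.op f) = X.map g.op (w.app (op ⟨s, hs⟩) f) :=
  types_congr_hom (w.naturality (Quiver.Hom.op
    (show (⟨t, ht⟩ : ObjectProperty.FullSubcategory fun r : R => d r ≤ m) ⟶ ⟨s, hs⟩ from ObjectProperty.homMk g))) f

/-- Restrict a map between `m`-truncations to a map between `n`-truncations, `n ≤ m`. -/
def resDown {d : R → ℕ} {m n : ℕ} (h : n ≤ m) {A X : Rᵒᵖ ⥤ Type}
    (w : (tr d m).obj A ⟶ (tr d m).obj X) : (tr d n).obj A ⟶ (tr d n).obj X where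
  app t := w.app (op ⟨t.unop.obj, t.unop.property.trans h⟩)
  naturality t t' i := w.naturality
    (Quiver.Hom.op (show (⟨t'.unop.obj, t'.unop.property.trans h⟩ :
        ObjectProperty.FullSubcategory fun r : R => d r ≤ m) ⟶ ⟨t.unop.obj, t.unop.property.trans h⟩ from ObjectProperty.homMk i.unop.hom))

/-- Representables of degree `≤ m` satisfy `PP` at level `m`. -/
lemma PP_of_le {d : R → ℕ} {m : ℕ} (X : Rᵒᵖ ⥤ Type) {s : R} (hs : d s ≤ m) :
    PP d m X (yoneda.obj s) := by
  constructor
  · intro v v' h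
    apply yonedaEquiv.injective
    rw [CategoryTheory.yonedaEquiv_apply, CategoryTheory.yonedaEquiv_apply]
    exact congr_fun (congrArg (fun w => NatTrans.app w (op ⟨s, hs⟩)) h) (𝟙 s)
  · intro w
    refine ⟨yonedaEquiv.symm (w.app (op ⟨s, hs⟩) (𝟙 s)), ?_⟩
    apply NatTrans.ext; funext t
    obtain ⟨⟨t, ht⟩⟩ := t
    ext f
    show (yonedaEquiv.symm _).app (op t) f = w.app (op ⟨t, ht⟩) f
    show X.map f.op (w.app (op ⟨s, hs⟩) (𝟙 s)) = w.app (op ⟨t, ht⟩) f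
    have h2 := tr_nat w ht hs f (𝟙 s)
    simp only [yoneda_obj_map] at h2 ⊢
    rw [← h2]

    simp

/-- If all representables satisfy `PP` at level `n`, then they do at any level `m ≥ n`. -/
lemma PP_up {d : R → ℕ} {n m : ℕ} (hnm : n ≤ m) (X : Rᵒᵖ ⥤ Type)
    (H : ∀ s : R, PP d n X (yoneda.obj s)) (r : R) :
    PP d m X (yoneda.obj r) := by
  constructor
  · intro v v' h
    apply (H r).1
    apply tr_ext
    intro s hs
    exact congrArg (fun w => NatTrans.app w (op ⟨s, hs.trans hnm⟩)) h
  · intro w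
    obtain ⟨v, hv⟩ := (H r).2 (resDown hnm w)
    refine ⟨v, ?_⟩
    apply NatTrans.ext; funext t
    obtain ⟨⟨s, hs⟩⟩ := t
    ext f
    show v.app (op s) f = w.app (op ⟨s, hs⟩) f
    have key : (tr d n).map (yoneda.map f ≫ v)
        = (tr d n).map (yonedaEquiv.symm (show X.obj (op s) from w.app (op ⟨s, hs⟩) f)) := by
      apply tr_ext
      intro t ht
      ext g
      show v.app (op t) (g ≫ f)
        = (yonedaEquiv.symm (show X.obj (op s) from w.app (op ⟨s, hs⟩) f)).app (op t) g
      show v.app (op t) (g ≫ f) = X.map g.op (w.app (op ⟨s, hs⟩) f)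
      have h1 : v.app (op t) (g ≫ f) = w.app (op ⟨t, ht.trans hnm⟩) (g ≫ f) :=
        types_congr_hom (congrArg (fun z => NatTrans.app z (op ⟨t, ht⟩)) hv) (g ≫ f)
      rw [h1]
      have h2 := tr_nat w (ht.trans hnm) hs g f
      simp only [yoneda_obj_map] at h2
      exact h2
    have veq := (H s).1 key
    have := types_congr_hom (congrArg (fun z => NatTrans.app z (op s)) veq) (𝟙 s)
    simp only [FunctorToTypes.comp, yoneda_map_app, Category.id_comp,
      CategoryTheory.yonedaEquiv_symm_app_apply, op_id, FunctorToTypes.map_id_apply] at this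
    simpa using this



/-- If the filler property (as `PP` at degree `d r - 1`) holds for all `r` of degree `> n`,
then all representables satisfy `PP` at level `n`. -/
lemma PP_down {d : R → ℕ} {n : ℕ} (X : Rᵒᵖ ⥤ Type)
    (H : ∀ r : R, n < d r → PP d (d r - 1) X (yoneda.obj r)) :
    ∀ s : R, PP d n X (yoneda.obj s) := by
  suffices h : ∀ k : ℕ, ∀ s : R, d s ≤ k → PP d n X (yoneda.obj s) from
    fun s => h (d s) s le_rfl
  intro k
  induction k with
  | zero =>
    intro s hs
    exact PP_of_le X (hs.trans (Nat.zero_le n))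
  | succ k ih =>
    intro s hs
    by_cases hsn : d s ≤ n
    · exact PP_of_le X hsn
    · push_neg at hsn
      rcases Nat.lt_succ_iff_lt_or_eq.mp (Nat.lt_succ_of_le hs) with h' | h'
      · exact ih s (Nat.lt_succ_iff.mp h')
      · -- d s = k + 1
        have hPP := H s hsn
        have hm : d s - 1 ≤ k := by omega
        have hnm : n ≤ d s - 1 := by omega
        constructor
        · intro v v' hvv
          apply hPP.1
          apply tr_ext
          intro t ht
          ext f
          replace hvv : (tr d n).map v = (tr d n).map v' := hvv
          have hcomp : (tr d n).map (yoneda.map f ≫ v) = (tr d n).map (yoneda.map f ≫ v') := by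
            rw [Functor.map_comp, Functor.map_comp, hvv]
          have := (ih t (ht.trans hm)).1 hcomp
          have := types_congr_hom (congrArg (fun z => NatTrans.app z (op t)) this) (𝟙 t)
          simpa using this
        · intro w
          choose V hV using fun (t : R) (ht : d t ≤ d s - 1) (f : t ⟶ s) =>
            (ih t (ht.trans hm)).2 ((tr d n).map (yoneda.map f) ≫ w)
          replace hV : ∀ (t : R) (ht : d t ≤ d s - 1) (f : t ⟶ s),
              (tr d n).map (V t ht f) = (tr d n).map (yoneda.map f) ≫ w := hV
          have Vnat : ∀ {ta tb : R} (hta : d ta ≤ d s - 1) (htb : d tb ≤ d s - 1)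
              (g : tb ⟶ ta) (f : ta ⟶ s),
              V tb htb (g ≫ f) = yoneda.map g ≫ V ta hta f := by
            intro ta tb hta htb g f
            apply (ih tb (htb.trans hm)).1
            show (tr d n).map _ = (tr d n).map _
            simp only [Functor.map_comp, hV, Category.assoc]
          let w' : (tr d (d s - 1)).obj (yoneda.obj s) ⟶ (tr d (d s - 1)).obj X :=
            { app := fun t => TypeCat.ofHom fun f => (V t.unop.obj t.unop.property f).app (op t.unop.obj)
                (𝟙 t.unop.obj)
              naturality := by
                intro t t' i
                ext f
                obtain ⟨⟨ta, hta⟩⟩ := t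
                obtain ⟨⟨tb, htb⟩⟩ := t'
                let g : tb ⟶ ta := i.unop.hom
                show (V tb htb (g ≫ f)).app (op tb) (𝟙 tb)
                  = X.map g.op ((V ta hta f).app (op ta) (𝟙 ta))
                rw [Vnat hta htb g f]
                have hnat := FunctorToTypes.naturality (V ta hta f) g.op (𝟙 ta)
                simp only [yoneda_obj_map, Category.comp_id] at hnat
                simp only [FunctorToTypes.comp, yoneda_map_app, Category.id_comp]
                simpa using hnat }
          obtain ⟨v, hv⟩ := hPP.2 w'
          refine ⟨v, ?_⟩
          apply NatTrans.ext; funext t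
          obtain ⟨⟨t, ht⟩⟩ := t
          ext f
          show v.app (op t) f = w.app (op ⟨t, ht⟩) f
          have h1 : v.app (op t) f = (V t (ht.trans hnm) f).app (op t) (𝟙 t) :=
            types_congr_hom (congrArg (fun z => NatTrans.app z (op ⟨t, ht.trans hnm⟩)) hv) f
          rw [h1]
          have h2 := types_congr_hom (congrArg (fun z => NatTrans.app z (op ⟨t, ht⟩))
            (hV t (ht.trans hnm) f)) (𝟙 t)
          simp only [FunctorToTypes.comp] at h2
          refine (show (V t (ht.trans hnm) f).app (op t) (𝟙 t)
              = w.app (op ⟨t, ht⟩) (𝟙 t ≫ f) from h2).trans ?_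
          exact congrArg (w.app (op ⟨t, ht⟩)) (Category.id_comp f)


lemma bij_unit_iff_PP {d : R → ℕ} {n : ℕ}
    {Rst : ((ObjectProperty.FullSubcategory fun r : R => d r ≤ n)ᵒᵖ ⥤ Type) ⥤ (Rᵒᵖ ⥤ Type)}
    (adjR : tr d n ⊣ Rst) (X : Rᵒᵖ ⥤ Type) (s : R) :
    Function.Bijective ((adjR.unit.app X).app (op s)) ↔ PP d n X (yoneda.obj s) := by
  have hfun : (fun v : yoneda.obj s ⟶ X => (tr d n).map v)
      = ⇑(adjR.homEquiv (yoneda.obj s) ((tr d n).obj X)).symm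
        ∘ ⇑(yonedaEquiv (C := R) (X := s) (F := Rst.obj ((tr d n).obj X))).symm
        ∘ ((adjR.unit.app X).app (op s)) ∘ ⇑(yonedaEquiv (C := R) (X := s) (F := X)) := by
    funext v
    simp only [Function.comp_apply]
    rw [Equiv.eq_symm_apply, Equiv.eq_symm_apply]
    have key : (adjR.unit.app X).app (op s) (yonedaEquiv v)
        = yonedaEquiv (adjR.homEquiv (yoneda.obj s) ((tr d n).obj X) ((tr d n).map v)) := by
      rw [Adjunction.homEquiv_unit]
      have h2 : adjR.unit.app (yoneda.obj s) ≫ Rst.map ((tr d n).map v)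
          = v ≫ adjR.unit.app X := (adjR.unit.naturality v).symm
      rw [h2, CategoryTheory.yonedaEquiv_comp]
    exact key.symm
  rw [PP, hfun, Equiv.comp_bijective, Equiv.comp_bijective]
  exact (Equiv.bijective_comp _ _).symm

lemma iso_unit_iff_PP {d : R → ℕ} {n : ℕ}
    {Rst : ((ObjectProperty.FullSubcategory fun r : R => d r ≤ n)ᵒᵖ ⥤ Type) ⥤ (Rᵒᵖ ⥤ Type)}
    (adjR : tr d n ⊣ Rst) (X : Rᵒᵖ ⥤ Type) :
    IsIso (adjR.unit.app X) ↔ ∀ s : R, PP d n X (yoneda.obj s) := by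
  rw [NatTrans.isIso_iff_isIso_app]
  constructor
  · intro h s
    exact (bij_unit_iff_PP adjR X s).mp ((isIso_iff_bijective _).mp (h (op s)))
  · intro h t
    rw [isIso_iff_bijective]
    exact (bij_unit_iff_PP adjR X t.unop).mpr (h t.unop)

lemma filler_iff_PP {d : R → ℕ} {m : ℕ}
    {L : ((ObjectProperty.FullSubcategory fun r : R => d r ≤ m)ᵒᵖ ⥤ Type) ⥤ (Rᵒᵖ ⥤ Type)}
    (adjL : L ⊣ tr d m) (r : R) (X : Rᵒᵖ ⥤ Type)
    (e : (ezBoundary r).toFunctor ≅ L.obj ((tr d m).obj (yoneda.obj r)))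
    (he : e.hom ≫ adjL.counit.app (yoneda.obj r) = (ezBoundary r).ι) :
    (∀ u : (ezBoundary r).toFunctor ⟶ X, ∃! v : yoneda.obj r ⟶ X, (ezBoundary r).ι ≫ v = u)
      ↔ PP d m X (yoneda.obj r) := by
  rw [← Function.bijective_iff_existsUnique (fun v : yoneda.obj r ⟶ X => (ezBoundary r).ι ≫ v)]
  have hfun : (fun v : yoneda.obj r ⟶ X => (ezBoundary r).ι ≫ v)
      = ⇑(e.homFromEquiv (Z := X)).symm
        ∘ ⇑(adjL.homEquiv ((tr d m).obj (yoneda.obj r)) X).symm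
        ∘ (fun v : yoneda.obj r ⟶ X => (tr d m).map v) := by
    funext v
    show (ezBoundary r).ι ≫ v
      = e.hom ≫ (adjL.homEquiv ((tr d m).obj (yoneda.obj r)) X).symm ((tr d m).map v)
    rw [Adjunction.homEquiv_counit]
    have h2 := adjL.counit.naturality v
    simp only [Functor.comp_map, Functor.id_map] at h2
    rw [h2, ← Category.assoc, he]
  rw [hfun, Equiv.comp_bijective, Equiv.comp_bijective]
  rfl

end Stmt5Aux

/-- For an EZ-category `R` and a presheaf `X` on `R`: `X` is `n`-coskeletal (the unit
`X ⟶ cosk_n X` of the adjunction `t_n^* ⊣ t_{n*}` is an isomorphism) if and only if for every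
object `r` with `d(r) > n` every morphism `∂R[r] ⟶ X` admits a unique filler `R[r] ⟶ X`,
given that `∂R[r] = sk_{d(r)-1} R[r]` (hypothesis `hbd`). -/
theorem stmt_5 {R : Type} [SmallCategory R] (E : EZStruct R) (n : ℕ)
    (L : ∀ m : ℕ, ((ObjectProperty.FullSubcategory fun r : R => E.deg r ≤ m)ᵒᵖ ⥤ Type) ⥤ (Rᵒᵖ ⥤ Type))
    (adjL : ∀ m : ℕ, L m ⊣
      (Functor.whiskeringLeft (ObjectProperty.FullSubcategory fun r : R => E.deg r ≤ m)ᵒᵖ Rᵒᵖ Type).obj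
        (ObjectProperty.ι fun r : R => E.deg r ≤ m).op)
    (Rst : ((ObjectProperty.FullSubcategory fun r : R => E.deg r ≤ n)ᵒᵖ ⥤ Type) ⥤ (Rᵒᵖ ⥤ Type))
    (adjR : ((Functor.whiskeringLeft (ObjectProperty.FullSubcategory fun r : R => E.deg r ≤ n)ᵒᵖ Rᵒᵖ Type).obj
      (ObjectProperty.ι fun r : R => E.deg r ≤ n).op) ⊣ Rst)
    (hbd : ∀ r : R,
      ∃ e : (ezBoundary r).toFunctor ≅ (L (E.deg r - 1)).obj
        (((Functor.whiskeringLeft (ObjectProperty.FullSubcategory fun x : R => E.deg x ≤ E.deg r - 1)ᵒᵖ Rᵒᵖ Type).obj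
          (ObjectProperty.ι fun x : R => E.deg x ≤ E.deg r - 1).op).obj (yoneda.obj r)),
        e.hom ≫ (adjL (E.deg r - 1)).counit.app (yoneda.obj r) = (ezBoundary r).ι)
    (X : Rᵒᵖ ⥤ Type) :
    IsIso (adjR.unit.app X) ↔
      ∀ r : R, n < E.deg r → ∀ u : (ezBoundary r).toFunctor ⟶ X,
        ∃! v : yoneda.obj r ⟶ X, (ezBoundary r).ι ≫ v = u := by

  rw [Stmt5Aux.iso_unit_iff_PP adjR X]
  constructor
  · intro H r hr
    obtain ⟨e, he⟩ := hbd r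
    exact (Stmt5Aux.filler_iff_PP (adjL (E.deg r - 1)) r X e he).mpr
      (Stmt5Aux.PP_up (by omega) X H r)
  · intro H
    apply Stmt5Aux.PP_down X
    intro r hr
    obtain ⟨e, he⟩ := hbd r
    exact (Stmt5Aux.filler_iff_PP (adjL (E.deg r - 1)) r X e he).mp (H r hr)
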